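/- Let n be a natural number and let X, Y be nonzero n×n complex matrices. If Re Tr(|Y*||X*|) = 0 or Re Tr(|Y||X|) = 0, then Re Tr(Y*X) = 0. -/

import Mathlib

open Matrix
open scoped ComplexOrder

/-- Hilbert–Schmidt (Frobenius) norm: ‖X‖₂ = √(Re Tr(XᴴX)). -/
noncomputable def hsNorm {n : ℕ} (X : Matrix (Fin n) (Fin n) ℂ) : ℝ :=
  Real.sqrt ((Matrix.trace (Xᴴ * X)).re)

/-- Angle Θ(X,Y) = arccos(Re Tr(YᴴX) / (‖X‖₂‖Y‖₂)). -/
noncomputable def theta {n : ℕ} (X Y : Matrix (Fin n) (Fin n) ℂ) : ℝ :=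
  Real.arccos ((Matrix.trace (Yᴴ * X)).re / (hsNorm X * hsNorm Y))

/-- |X| : the positive semidefinite square root of XᴴX. -/
noncomputable def matAbs {n : ℕ} (X : Matrix (Fin n) (Fin n) ℂ) : Matrix (Fin n) (Fin n) ℂ :=
  (Matrix.posSemidef_conjTranspose_mul_self X).1.eigenvectorUnitary.1 *
    Matrix.diagonal ((↑) ∘ Real.sqrt ∘ (Matrix.posSemidef_conjTranspose_mul_self X).1.eigenvalues) *
    (star (Matrix.posSemidef_conjTranspose_mul_self X).1.eigenvectorUnitary : Matrix (Fin n) (Fin n) ℂ)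

set_option maxHeartbeats 1000000

noncomputable def auxSqrt {n : ℕ} {M : Matrix (Fin n) (Fin n) ℂ} (hM : M.PosSemidef) :
    Matrix (Fin n) (Fin n) ℂ :=
  hM.1.eigenvectorUnitary.1 * Matrix.diagonal ((↑) ∘ Real.sqrt ∘ hM.1.eigenvalues) *
    (star hM.1.eigenvectorUnitary : Matrix (Fin n) (Fin n) ℂ)

lemma auxSqrt_spec {n : ℕ} {M : Matrix (Fin n) (Fin n) ℂ} (hM : M.PosSemidef) :
    (auxSqrt hM).PosSemidef ∧ auxSqrt hM * auxSqrt hM = M := by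
  have hU : (star hM.1.eigenvectorUnitary : Matrix (Fin n) (Fin n) ℂ) =
      (hM.1.eigenvectorUnitary.1)ᴴ := rfl
  constructor
  · unfold auxSqrt
    rw [hU]
    apply Matrix.PosSemidef.mul_mul_conjTranspose_same
    rw [Matrix.posSemidef_diagonal_iff]
    intro i
    simp
  · unfold auxSqrt
    conv_rhs => rw [hM.1.spectral_theorem, Unitary.conjStarAlgAut_apply]
    have hUU : (star hM.1.eigenvectorUnitary : Matrix (Fin n) (Fin n) ℂ) *
        hM.1.eigenvectorUnitary.1 = 1 := Unitary.coe_star_mul_self _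
    rw [show ∀ a b c d e f : Matrix (Fin n) (Fin n) ℂ, a * b * c * (d * e * f)
        = a * (b * (c * d) * e) * f from fun a b c d e f => by simp only [Matrix.mul_assoc],
      hUU, Matrix.mul_one, Matrix.diagonal_mul_diagonal]
    congr 3
    funext i
    simp only [Function.comp_apply]
    rw [← Complex.ofReal_mul, Real.mul_self_sqrt (hM.eigenvalues_nonneg i)]
    rfl

lemma aux_eq_zero_of_trace {n : ℕ} (M : Matrix (Fin n) (Fin n) ℂ)
    (h : (Matrix.trace (Mᴴ * M)).re = 0) : M = 0 := by
  have hsum : ∑ j, ∑ i, Complex.normSq (M i j) = 0 := by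
    have : Matrix.trace (Mᴴ * M) = ((∑ j, ∑ i, Complex.normSq (M i j) : ℝ) : ℂ) := by
      simp only [Matrix.trace, Matrix.diag, Matrix.mul_apply, Matrix.conjTranspose_apply]
      push_cast
      congr 1; ext j; congr 1; ext i
      rw [Complex.normSq_eq_conj_mul_self]; rfl
    rw [this] at h
    simpa using h
  ext i j
  have h1 : ∀ j ∈ Finset.univ, (0:ℝ) ≤ ∑ i, Complex.normSq (M i j) := fun j _ =>
    Finset.sum_nonneg fun i _ => Complex.normSq_nonneg _
  have h2 := (Finset.sum_eq_zero_iff_of_nonneg h1).mp hsum j (Finset.mem_univ j)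
  have h3 := (Finset.sum_eq_zero_iff_of_nonneg
    (fun i _ => Complex.normSq_nonneg (M i j))).mp h2 i (Finset.mem_univ i)
  simpa using Complex.normSq_eq_zero.mp h3

lemma aux_key {n : ℕ} (X Y : Matrix (Fin n) (Fin n) ℂ)
    (h : (Matrix.trace (matAbs Y * matAbs X)).re = 0) :
    (Matrix.trace (Yᴴ * X)).re = 0 := by
  set A := matAbs X with hA
  set B := matAbs Y with hB
  have pA : A.PosSemidef := (auxSqrt_spec (Matrix.posSemidef_conjTranspose_mul_self X)).1
  have pB : B.PosSemidef := (auxSqrt_spec (Matrix.posSemidef_conjTranspose_mul_self Y)).1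
  set A2 := auxSqrt pA with hA2
  set B2 := auxSqrt pB with hB2
  have hA2H : A2ᴴ = A2 := (auxSqrt_spec pA).1.isHermitian
  have hB2H : B2ᴴ = B2 := (auxSqrt_spec pB).1.isHermitian
  have hA2sq : A2 * A2 = A := (auxSqrt_spec pA).2
  have hB2sq : B2 * B2 = B := (auxSqrt_spec pB).2
  have hAsq : A * A = Xᴴ * X := (auxSqrt_spec (Matrix.posSemidef_conjTranspose_mul_self X)).2
  have hBsq : B * B = Yᴴ * Y := (auxSqrt_spec (Matrix.posSemidef_conjTranspose_mul_self Y)).2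
  -- trace(B*A) = trace((A2*B2)ᴴ * (A2*B2))
  have htr : Matrix.trace ((A2 * B2)ᴴ * (A2 * B2)) = Matrix.trace (B * A) := by
    rw [Matrix.conjTranspose_mul, hA2H, hB2H]
    calc Matrix.trace (B2 * A2 * (A2 * B2))
        = Matrix.trace ((A2 * B2) * (B2 * A2)) := Matrix.trace_mul_comm _ _
      _ = Matrix.trace (A2 * (B2 * B2) * A2) := by rw [Matrix.mul_assoc, Matrix.mul_assoc,
            Matrix.mul_assoc]
      _ = Matrix.trace (A2 * B * A2) := by rw [hB2sq]
      _ = Matrix.trace (A2 * (B * A2)) := by rw [Matrix.mul_assoc]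
      _ = Matrix.trace ((B * A2) * A2) := Matrix.trace_mul_comm _ _
      _ = Matrix.trace (B * A) := by rw [Matrix.mul_assoc, hA2sq]
  have hM : A2 * B2 = 0 := aux_eq_zero_of_trace _ (by rw [htr]; exact h)
  have hAB : A * B = 0 := by
    rw [← hA2sq, ← hB2sq, Matrix.mul_assoc, ← Matrix.mul_assoc A2 B2 B2, hM,
      Matrix.zero_mul, Matrix.mul_zero]
  have hXY : (Xᴴ * X) * (Yᴴ * Y) = 0 := by
    rw [← hAsq, ← hBsq, Matrix.mul_assoc, ← Matrix.mul_assoc A B B, hAB,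
      Matrix.zero_mul, Matrix.mul_zero]
  have h1 : X * (Yᴴ * Y) = 0 := (Matrix.conjTranspose_mul_self_mul_eq_zero X _).mp hXY
  have h2 : (Yᴴ * Y) * Xᴴ = 0 := by
    have := congrArg Matrix.conjTranspose h1
    simpa [Matrix.conjTranspose_mul, Matrix.mul_assoc] using this
  have h3 : Y * Xᴴ = 0 := (Matrix.conjTranspose_mul_self_mul_eq_zero Y Xᴴ).mp h2
  have h4 : X * Yᴴ = 0 := by
    have := congrArg Matrix.conjTranspose h3
    simpa using this
  have : Matrix.trace (Yᴴ * X) = 0 := by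
    rw [Matrix.trace_mul_comm, h4, Matrix.trace_zero]
  simp [this]

theorem stmt_11 {n : ℕ} (X Y : Matrix (Fin n) (Fin n) ℂ) (hX : X ≠ 0) (hY : Y ≠ 0)
    (h : (Matrix.trace (matAbs Yᴴ * matAbs Xᴴ)).re = 0 ∨
         (Matrix.trace (matAbs Y * matAbs X)).re = 0) :
    (Matrix.trace (Yᴴ * X)).re = 0 := by
  rcases h with h | h
  · have h1 := aux_key Xᴴ Yᴴ h
    rw [Matrix.conjTranspose_conjTranspose] at h1
    have : Matrix.trace (Y * Xᴴ) = star (Matrix.trace (Yᴴ * X)) := by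
      rw [← Matrix.trace_conjTranspose, Matrix.conjTranspose_mul,
        Matrix.conjTranspose_conjTranspose, Matrix.trace_mul_comm]
    rw [this] at h1
    simpa using h1
  · exact aux_key X Y h
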